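/- arXiv:1401.2326 — 5 statements merged into one kernel-verified Lean document; each statement's English description precedes it below -/
import Mathlib

section
/- Let 0 < T < 1, α₁ > 1/2, and suppose α₀ ≥ (1/2 - α₁)/((1/2 - α₁)·ln(1-T) + 1) + 1/2 and α₀ + α₁ ≥ 1. Define G(σ) = (σ + α₀ - 1/2)(σ + α₁ - 1/2) - (1-T)^{2σ}(σ - α₀ + 1/2)(σ - α₁ + 1/2). Then G(σ) > 0 for all σ > 0. -/
private lemma aux_pos (a b L : ℝ) (hb : 0 < b) (hL : L < 0) (hab : 0 ≤ a + b)
    (key : 0 ≤ a + b - L * a * b) :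
    ∀ σ > (0:ℝ), 0 < (σ + a) * (σ + b) - Real.exp (2 * σ * L) * ((σ - a) * (σ - b)) := by
  set H : ℝ → ℝ := fun σ => Real.exp (-(2 * σ * L)) * (2 * σ + (a + b))
    - (2 * L * ((σ - a) * (σ - b)) + 2 * σ - (a + b)) with hHdef
  set g : ℝ → ℝ := fun σ => (σ + a) * (σ + b) - Real.exp (2 * σ * L) * ((σ - a) * (σ - b))
    with hgdef
  -- derivative of H
  have hH : ∀ σ : ℝ, HasDerivAt H
      (Real.exp (-(2 * σ * L)) * (-(2 * 1 * L)) * (2 * σ + (a + b))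
        + Real.exp (-(2 * σ * L)) * (2 * 1)
        - (2 * L * (1 * (σ - b) + (σ - a) * 1) + 2 * 1)) σ := by
    intro σ
    have hid : HasDerivAt (fun x : ℝ => x) 1 σ := hasDerivAt_id σ
    have hE : HasDerivAt (fun x : ℝ => 2 * x * L) (2 * 1 * L) σ :=
      (hid.const_mul 2).mul_const L
    have hEneg : HasDerivAt (fun x : ℝ => Real.exp (-(2 * x * L)))
        (Real.exp (-(2 * σ * L)) * (-(2 * 1 * L))) σ :=
      hE.neg.exp
    have hlin : HasDerivAt (fun x : ℝ => 2 * x + (a + b)) (2 * 1) σ :=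
      (hid.const_mul 2).add_const (a + b)
    have hQ : HasDerivAt (fun x : ℝ => (x - a) * (x - b)) (1 * (σ - b) + (σ - a) * 1) σ :=
      (hid.sub_const a).mul (hid.sub_const b)
    have h2 : HasDerivAt (fun x : ℝ => 2 * L * ((x - a) * (x - b)) + 2 * x - (a + b))
        (2 * L * (1 * (σ - b) + (σ - a) * 1) + 2 * 1) σ :=
      ((hQ.const_mul (2 * L)).add (hid.const_mul 2)).sub_const (a + b)
    exact (hEneg.mul hlin).sub h2
  -- the derivative of H is positive for σ > 0
  have hHpos : ∀ σ : ℝ, 0 < σ →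
      0 < Real.exp (-(2 * σ * L)) * (-(2 * 1 * L)) * (2 * σ + (a + b))
        + Real.exp (-(2 * σ * L)) * (2 * 1)
        - (2 * L * (1 * (σ - b) + (σ - a) * 1) + 2 * 1) := by
    intro σ hσ
    have hx : (0:ℝ) ≤ σ * (-L) := by nlinarith
    have h1 : 1 + σ * (-L) ≤ Real.exp (σ * (-L)) := by
      have := Real.add_one_le_exp (σ * (-L)); linarith
    have h2 : (1 + σ * (-L)) ^ 2 ≤ Real.exp (-(2 * σ * L)) := by
      have hp : (1 + σ * (-L)) ^ 2 ≤ Real.exp (σ * (-L)) ^ 2 := by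
        apply pow_le_pow_left₀ (by linarith) h1
      calc (1 + σ * (-L)) ^ 2 ≤ Real.exp (σ * (-L)) ^ 2 := hp
        _ = Real.exp (-(2 * σ * L)) := by
            rw [← Real.exp_nat_mul]; ring_nf
    set E := Real.exp (-(2 * σ * L)) with hEdef
    have hE0 : (0:ℝ) < E := Real.exp_pos _
    -- E ≥ 1 - 2σL + σ²L²
    have hE1 : 1 - 2 * σ * L + σ ^ 2 * L ^ 2 ≤ E := by nlinarith [h2]
    have hX : (0:ℝ) ≤ -(2 * 1 * L) * (2 * σ + (a + b)) := by nlinarith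
    nlinarith [mul_le_mul_of_nonneg_right hE1 hX,
      mul_pos hσ (neg_pos.2 hL),
      mul_nonneg (mul_nonneg hσ.le (mul_self_nonneg L)) hab,
      mul_nonneg (mul_nonneg (mul_nonneg hσ.le hσ.le) (mul_self_nonneg L)) (neg_pos.2 hL).le,
      mul_nonneg (mul_nonneg hσ.le (mul_self_nonneg L)) (mul_nonneg (neg_pos.2 hL).le hab),
      mul_nonneg (mul_nonneg hσ.le hσ.le) (mul_self_nonneg L),
      mul_le_mul_of_nonneg_right hE1 (by norm_num : (0:ℝ) ≤ 2)]
  -- H is strictly monotone on [0, ∞)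
  have hHcont : Continuous H := by
    rw [hHdef]; fun_prop
  have hHmono : StrictMonoOn H (Set.Ici 0) := by
    apply strictMonoOn_of_deriv_pos (convex_Ici 0) hHcont.continuousOn
    intro σ hσ
    rw [interior_Ici] at hσ
    rw [(hH σ).deriv]
    exact hHpos σ hσ
  have hH0 : 0 ≤ H 0 := by
    rw [hHdef]; simp only
    rw [show -(2 * (0:ℝ) * L) = 0 by ring, Real.exp_zero]
    nlinarith
  have hHp : ∀ σ : ℝ, 0 < σ → 0 < H σ := by
    intro σ hσ
    have := hHmono (Set.self_mem_Ici) (Set.mem_Ici.2 hσ.le) hσ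
    linarith
  -- derivative of g
  have hg : ∀ σ : ℝ, HasDerivAt g (Real.exp (2 * σ * L) * H σ) σ := by
    intro σ
    have hid : HasDerivAt (fun x : ℝ => x) 1 σ := hasDerivAt_id σ
    have hE : HasDerivAt (fun x : ℝ => 2 * x * L) (2 * 1 * L) σ :=
      (hid.const_mul 2).mul_const L
    have hexp : HasDerivAt (fun x : ℝ => Real.exp (2 * x * L))
        (Real.exp (2 * σ * L) * (2 * 1 * L)) σ :=
      hE.exp
    have hP : HasDerivAt (fun x : ℝ => (x + a) * (x + b)) (1 * (σ + b) + (σ + a) * 1) σ :=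
      (hid.add_const a).mul (hid.add_const b)
    have hQ : HasDerivAt (fun x : ℝ => (x - a) * (x - b)) (1 * (σ - b) + (σ - a) * 1) σ :=
      (hid.sub_const a).mul (hid.sub_const b)
    have := hP.sub (hexp.mul hQ)
    refine this.congr_deriv ?_
    rw [hHdef]
    simp only
    rw [Real.exp_neg]
    field_simp
    ring
  have hgcont : Continuous g := by
    rw [hgdef]; fun_prop
  have hgmono : StrictMonoOn g (Set.Ici 0) := by
    apply strictMonoOn_of_deriv_pos (convex_Ici 0) hgcont.continuousOn
    intro σ hσ
    rw [interior_Ici] at hσ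
    rw [(hg σ).deriv]
    exact mul_pos (Real.exp_pos _) (hHp σ hσ)
  have hg0 : g 0 = 0 := by
    rw [hgdef]; simp only
    rw [show 2 * (0:ℝ) * L = 0 by ring, Real.exp_zero]
    ring
  intro σ hσ
  have := hgmono (Set.self_mem_Ici) (Set.mem_Ici.2 hσ.le) hσ
  rw [hg0] at this
  exact this

theorem stmt_1 (T α₀ α₁ : ℝ) (hT0 : 0 < T) (hT1 : T < 1) (hα₁ : 1/2 < α₁)
    (hα₀ : α₀ ≥ (1/2 - α₁) / ((1/2 - α₁) * Real.log (1-T) + 1) + 1/2)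
    (hsum : α₀ + α₁ ≥ 1)
    (G : ℝ → ℝ)
    (hG : G = fun σ => (σ + α₀ - 1/2) * (σ + α₁ - 1/2)
      - (1-T) ^ (2*σ) * ((σ - α₀ + 1/2) * (σ - α₁ + 1/2))) :
    ∀ σ > (0:ℝ), G σ > 0 := by
  set L := Real.log (1 - T) with hLdef
  set a := α₀ - 1/2 with hadef
  set b := α₁ - 1/2 with hbdef
  have hc : (0:ℝ) < 1 - T := by linarith
  have hL : L < 0 := Real.log_neg hc (by linarith)
  have hb : 0 < b := by rw [hbdef]; linarith
  have hab : 0 ≤ a + b := by rw [hadef, hbdef]; linarith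
  have hD : 0 < (1/2 - α₁) * L + 1 := by nlinarith
  have hdiv : (1/2 - α₁) ≤ a * ((1/2 - α₁) * L + 1) := by
    rw [← div_le_iff₀ hD] at *
    have := hα₀
    rw [hadef]; linarith
  have key : 0 ≤ a + b - L * a * b := by
    have hba : (1/2 - α₁) = -b := by rw [hbdef]; ring
    rw [hba] at hdiv
    nlinarith
  intro σ hσ
  have := aux_pos a b L hb hL hab key σ hσ
  rw [hG]
  simp only
  rw [Real.rpow_def_of_pos hc, show Real.log (1-T) * (2*σ) = 2 * σ * L by rw [hLdef]; ring]
  have heq : (σ + α₀ - 1/2) * (σ + α₁ - 1/2) - Real.exp (2*σ*L) * ((σ - α₀ + 1/2) * (σ - α₁ + 1/2))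
      = (σ + a) * (σ + b) - Real.exp (2 * σ * L) * ((σ - a) * (σ - b)) := by
    rw [hadef, hbdef]; ring
  linarith [heq ▸ this]
end

section
/- Let 0 < T < 1, α₁ > 1/2, α₀ + α₁ > 1, and α₀ < (1/2 - α₁)/((1/2 - α₁)·ln(1-T) + 1) + 1/2. Define G(σ) = (σ + α₀ - 1/2)(σ + α₁ - 1/2) - (1-T)^{2σ}(σ - α₀ + 1/2)(σ - α₁ + 1/2). Then G(σ) > 0 for all σ ≥ 1/2 - α₀. -/
theorem stmt_2 (T α₀ α₁ : ℝ) (hT0 : 0 < T) (hT1 : T < 1) (hα₁ : 1/2 < α₁)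
    (hsum : α₀ + α₁ > 1)
    (hα₀ : α₀ < (1/2 - α₁) / ((1/2 - α₁) * Real.log (1-T) + 1) + 1/2)
    (G : ℝ → ℝ)
    (hG : G = fun σ => (σ + α₀ - 1/2) * (σ + α₁ - 1/2)
      - (1-T) ^ (2*σ) * ((σ - α₀ + 1/2) * (σ - α₁ + 1/2))) :
    ∀ σ ≥ 1/2 - α₀, G σ > 0 := by
  intro σ hσ
  have h1T : (0:ℝ) < 1 - T := by linarith
  have hL : Real.log (1-T) < 0 := Real.log_neg h1T (by linarith)
  have hα₀half : α₀ < 1/2 := by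
    have hden : (1/2 - α₁) * Real.log (1-T) + 1 > 1 := by nlinarith
    have : (1/2 - α₁) / ((1/2 - α₁) * Real.log (1-T) + 1) < 0 :=
      div_neg_of_neg_of_pos (by linarith) (by linarith)
    linarith
  have hE : 0 < (1-T) ^ (2*σ) := Real.rpow_pos_of_pos h1T _
  subst hG
  simp only
  by_cases hd : σ < α₁ - 1/2
  · have ha : 0 ≤ σ + α₀ - 1/2 := by linarith
    have hb : 0 < σ + α₁ - 1/2 := by linarith
    have hc : 0 < σ - α₀ + 1/2 := by linarith
    have hdd : σ - α₁ + 1/2 < 0 := by linarith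
    have hneg : (1-T)^(2*σ) * ((σ - α₀ + 1/2) * (σ - α₁ + 1/2)) < 0 :=
      mul_neg_of_pos_of_neg hE (mul_neg_of_pos_of_neg hc hdd)
    nlinarith
  · push_neg at hd
    have hσpos : 0 < σ := by linarith
    have hE1 : (1-T)^(2*σ) ≤ 1 :=
      Real.rpow_le_one (le_of_lt h1T) (by linarith) (by linarith)
    have hc : 0 < σ - α₀ + 1/2 := by linarith
    have hdd : 0 ≤ σ - α₁ + 1/2 := by linarith
    have hcd : 0 ≤ (σ - α₀ + 1/2) * (σ - α₁ + 1/2) := mul_nonneg hc.le hdd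
    have hle : (1-T)^(2*σ) * ((σ - α₀ + 1/2) * (σ - α₁ + 1/2))
        ≤ (σ - α₀ + 1/2) * (σ - α₁ + 1/2) := by nlinarith
    nlinarith
end

section
/- Let 0 < T < 1, α₁ > 1/2, α₀ + α₁ > 1, and α₀ < (1/2 - α₁)/((1/2 - α₁)·ln(1-T) + 1) + 1/2. Define G(σ) = (σ + α₀ - 1/2)(σ + α₁ - 1/2) - (1-T)^{2σ}(σ - α₀ + 1/2)(σ - α₁ + 1/2). Then G'(0) = 2(α₀ + α₁ - 1) - 2·ln(1-T)·(1/2 - α₀)(1/2 - α₁) and G'(0) < 0. -/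
theorem stmt_3 (T α₀ α₁ : ℝ) (hT0 : 0 < T) (hT1 : T < 1) (hα₁ : 1/2 < α₁)
    (hsum : α₀ + α₁ > 1)
    (hα₀ : α₀ < (1/2 - α₁) / ((1/2 - α₁) * Real.log (1-T) + 1) + 1/2)
    (G : ℝ → ℝ)
    (hG : G = fun σ => (σ + α₀ - 1/2) * (σ + α₁ - 1/2)
      - (1-T) ^ (2*σ) * ((σ - α₀ + 1/2) * (σ - α₁ + 1/2))) :
    deriv G 0 = 2 * (α₀ + α₁ - 1) - 2 * Real.log (1-T) * ((1/2 - α₀) * (1/2 - α₁)) ∧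
    deriv G 0 < 0 := by
  have hb : (0:ℝ) < 1 - T := by linarith
  set L := Real.log (1-T) with hL
  have hLneg : L < 0 := Real.log_neg hb (by linarith)
  -- derivative computation
  have hA : HasDerivAt (fun σ : ℝ => σ + α₀ - 1/2) 1 0 := by
    simpa using ((hasDerivAt_id (0:ℝ)).add_const α₀).sub_const (1/2)
  have hB : HasDerivAt (fun σ : ℝ => σ + α₁ - 1/2) 1 0 := by
    simpa using ((hasDerivAt_id (0:ℝ)).add_const α₁).sub_const (1/2)
  have hC : HasDerivAt (fun σ : ℝ => σ - α₀ + 1/2) 1 0 := by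
    simpa using ((hasDerivAt_id (0:ℝ)).sub_const α₀).add_const (1/2)
  have hD : HasDerivAt (fun σ : ℝ => σ - α₁ + 1/2) 1 0 := by
    simpa using ((hasDerivAt_id (0:ℝ)).sub_const α₁).add_const (1/2)
  have h2σ : HasDerivAt (fun σ : ℝ => 2 * σ) 2 0 := by
    simpa using (hasDerivAt_id (0:ℝ)).const_mul 2
  have hE : HasDerivAt (fun σ : ℝ => (1-T) ^ (2*σ)) (L * 2) 0 := by
    have := (Real.hasStrictDerivAt_const_rpow hb (2*(0:ℝ))).hasDerivAt.comp 0 h2σ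
    simp only [mul_zero, Real.rpow_zero, one_mul] at this
    exact this
  have hP : HasDerivAt (fun σ : ℝ => (σ - α₀ + 1/2) * (σ - α₁ + 1/2))
      (1 * (0 - α₁ + 1/2) + (0 - α₀ + 1/2) * 1) 0 := hC.mul hD
  have hQ : HasDerivAt (fun σ : ℝ => (σ + α₀ - 1/2) * (σ + α₁ - 1/2))
      (1 * (0 + α₁ - 1/2) + (0 + α₀ - 1/2) * 1) 0 := hA.mul hB
  have hEP : HasDerivAt (fun σ : ℝ => (1-T) ^ (2*σ) * ((σ - α₀ + 1/2) * (σ - α₁ + 1/2)))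
      (L * 2 * ((0 - α₀ + 1/2) * (0 - α₁ + 1/2))
        + (1-T) ^ (2*(0:ℝ)) * (1 * (0 - α₁ + 1/2) + (0 - α₀ + 1/2) * 1)) 0 := hE.mul hP
  have hGd : HasDerivAt G
      ((1 * (0 + α₁ - 1/2) + (0 + α₀ - 1/2) * 1)
        - (L * 2 * ((0 - α₀ + 1/2) * (0 - α₁ + 1/2))
          + (1-T) ^ (2*(0:ℝ)) * (1 * (0 - α₁ + 1/2) + (0 - α₀ + 1/2) * 1))) 0 := by
    rw [hG]; exact hQ.sub hEP
  have hderiv : deriv G 0 = 2 * (α₀ + α₁ - 1) - 2 * L * ((1/2 - α₀) * (1/2 - α₁)) := by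
    rw [hGd.deriv]
    have : (1-T) ^ (2*(0:ℝ)) = 1 := by norm_num
    rw [this]; ring
  refine ⟨hderiv, ?_⟩
  rw [hderiv]
  -- inequality
  have hden : (0:ℝ) < (1/2 - α₁) * L + 1 := by
    have : 0 < (1/2 - α₁) * L := mul_pos_of_neg_of_neg (by linarith) hLneg
    linarith
  have h1 : (α₀ - 1/2) * ((1/2 - α₁) * L + 1) < 1/2 - α₁ := by
    have := (lt_div_iff₀ hden).mp (by linarith [hα₀] : α₀ - 1/2 < (1/2 - α₁) / ((1/2 - α₁) * L + 1))
    linarith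
  nlinarith [h1]
end

section
/- Let 0 < T < 1, α₁ > 1/2, α₀ + α₁ > 1, and α₀ < (1/2 - α₁)/((1/2 - α₁)·ln(1-T) + 1) + 1/2. Define G(σ) = (σ + α₀ - 1/2)(σ + α₁ - 1/2) - (1-T)^{2σ}(σ - α₀ + 1/2)(σ - α₁ + 1/2). Then G''(σ) > 0 for all σ with 0 ≤ σ ≤ 1/2 - α₀, i.e., G is strictly convex on [0, 1/2 - α₀]. -/
set_option maxHeartbeats 1000000 in
theorem stmt_4 (T α₀ α₁ : ℝ) (hT0 : 0 < T) (hT1 : T < 1) (hα₁ : 1/2 < α₁)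
    (hsum : α₀ + α₁ > 1)
    (hα₀ : α₀ < (1/2 - α₁) / ((1/2 - α₁) * Real.log (1-T) + 1) + 1/2)
    (G : ℝ → ℝ)
    (hG : G = fun σ => (σ + α₀ - 1/2) * (σ + α₁ - 1/2)
      - (1-T) ^ (2*σ) * ((σ - α₀ + 1/2) * (σ - α₁ + 1/2))) :
    (∀ σ, 0 ≤ σ → σ ≤ 1/2 - α₀ → iteratedDeriv 2 G σ > 0) ∧
    StrictConvexOn ℝ (Set.Icc (0:ℝ) (1/2 - α₀)) G := by
  have hT' : (0:ℝ) < 1 - T := by linarith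
  set L := Real.log (1 - T) with hLdef
  have hL : L < 0 := Real.log_neg hT' (by linarith)
  have hb : (0:ℝ) < α₁ - 1/2 := by linarith
  have hGrw : G = fun σ : ℝ => (σ + α₀ - 1/2) * (σ + α₁ - 1/2)
      - Real.exp (L * (2*σ)) * ((σ - α₀ + 1/2) * (σ - α₁ + 1/2)) := by
    rw [hG]; funext σ; rw [Real.rpow_def_of_pos hT']
  -- key inequality from hα₀
  have hD : 0 < (1/2 - α₁) * L + 1 := by nlinarith
  have h1 : α₀ - 1/2 < (1/2 - α₁) / ((1/2 - α₁) * L + 1) := by linarith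
  have h2 : (α₀ - 1/2) * ((1/2 - α₁) * L + 1) < 1/2 - α₁ := (lt_div_iff₀ hD).mp h1
  have habL : (α₀ - 1/2) * (α₁ - 1/2) * L > (α₀ - 1/2) + (α₁ - 1/2) := by nlinarith
  have ha : α₀ - 1/2 < 0 := by nlinarith
  -- f σ := L*(σ-α₀+1/2)*(σ-α₁+1/2) + 2σ - α₀ - α₁ + 1 > 0 on [0, 1/2-α₀]
  have hf0 : 0 < L*((0:ℝ)-α₀+1/2)*((0:ℝ)-α₁+1/2) + 2*0 - α₀ - α₁ + 1 := by nlinarith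
  have hfa : 0 < L*((1/2-α₀)-α₀+1/2)*((1/2-α₀)-α₁+1/2) + 2*(1/2-α₀) - α₀ - α₁ + 1 := by
    nlinarith [mul_pos (show (0:ℝ) < α₀ + α₁ - 1 by linarith)
        (show (0:ℝ) < (α₀-1/2)*(α₁-1/2)*L - ((α₀-1/2)+(α₁-1/2)) by linarith),
      sq_nonneg (α₀ + α₁ - 1), sq_nonneg (α₀ - 1/2),
      mul_pos (show (0:ℝ) < 1/2 - α₀ by linarith) hb]
  have hf : ∀ σ : ℝ, 0 ≤ σ → σ ≤ 1/2 - α₀ →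
      0 < L*(σ-α₀+1/2)*(σ-α₁+1/2) + 2*σ - α₀ - α₁ + 1 := by
    intro σ h0 h1'
    obtain ⟨A, hA⟩ : ∃ x : ℝ, x = L*((0:ℝ)-α₀+1/2)*((0:ℝ)-α₁+1/2) + 2*0 - α₀ - α₁ + 1 :=
      ⟨_, rfl⟩
    obtain ⟨B, hB⟩ : ∃ x : ℝ,
        x = L*((1/2-α₀)-α₀+1/2)*((1/2-α₀)-α₁+1/2) + 2*(1/2-α₀) - α₀ - α₁ + 1 := ⟨_, rfl⟩
    obtain ⟨m, hm'⟩ : ∃ x : ℝ, x = min A B := ⟨_, rfl⟩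
    have hA0 : 0 < A := hA ▸ hf0
    have hB0 : 0 < B := hB ▸ hfa
    have hm : 0 < m := hm' ▸ lt_min hA0 hB0
    have key : (1/2 - α₀) * (L*(σ-α₀+1/2)*(σ-α₁+1/2) + 2*σ - α₀ - α₁ + 1)
        = (1/2 - α₀ - σ) * A + σ * B + (1/2 - α₀) * ((-L) * (σ * (1/2 - α₀ - σ))) := by
      rw [hA, hB]; ring
    have t1 : (1/2 - α₀ - σ) * m ≤ (1/2 - α₀ - σ) * A :=
      mul_le_mul_of_nonneg_left (hm' ▸ min_le_left A B) (by linarith)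
    have t2 : σ * m ≤ σ * B :=
      mul_le_mul_of_nonneg_left (hm' ▸ min_le_right A B) h0
    have t3 : 0 ≤ (1/2 - α₀) * ((-L) * (σ * (1/2 - α₀ - σ))) := by
      apply mul_nonneg (by linarith)
      exact mul_nonneg (by linarith) (mul_nonneg h0 (by linarith))
    have t4 : 0 < (1/2 - α₀) * m := mul_pos (by linarith) hm
    have t5 : (1/2 - α₀) * m = (1/2 - α₀ - σ) * m + σ * m := by ring
    have hprod : 0 < (1/2 - α₀) * (L*(σ-α₀+1/2)*(σ-α₁+1/2) + 2*σ - α₀ - α₁ + 1) := by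
      rw [key]; linarith [t1, t2, t3, t4, t5]
    nlinarith [hprod, show (0:ℝ) < 1/2 - α₀ by linarith]
  -- derivatives
  have hE : ∀ σ : ℝ, HasDerivAt (fun σ => Real.exp (L * (2*σ)))
      (Real.exp (L * (2*σ)) * (2*L)) σ := by
    intro σ
    have h1 : HasDerivAt (fun σ : ℝ => L * (2*σ)) (2*L) σ := by
      simpa [mul_comm, mul_assoc] using ((hasDerivAt_id σ).const_mul 2).const_mul L
    exact (Real.hasDerivAt_exp _).comp σ h1
  have hP : ∀ σ : ℝ, HasDerivAt (fun σ : ℝ => (σ - α₀ + 1/2) * (σ - α₁ + 1/2))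
      (2*σ - α₀ - α₁ + 1) σ := by
    intro σ
    have h1 : HasDerivAt (fun σ : ℝ => σ - α₀ + 1/2) 1 σ :=
      ((hasDerivAt_id σ).sub_const α₀).add_const _
    have h2 : HasDerivAt (fun σ : ℝ => σ - α₁ + 1/2) 1 σ :=
      ((hasDerivAt_id σ).sub_const α₁).add_const _
    have := h1.fun_mul h2
    exact this.congr_deriv (by ring)
  have hQ : ∀ σ : ℝ, HasDerivAt (fun σ : ℝ => (σ + α₀ - 1/2) * (σ + α₁ - 1/2))
      (2*σ + α₀ + α₁ - 1) σ := by
    intro σ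
    have h1 : HasDerivAt (fun σ : ℝ => σ + α₀ - 1/2) 1 σ :=
      ((hasDerivAt_id σ).add_const α₀).sub_const _
    have h2 : HasDerivAt (fun σ : ℝ => σ + α₁ - 1/2) 1 σ :=
      ((hasDerivAt_id σ).add_const α₁).sub_const _
    have := h1.fun_mul h2
    exact this.congr_deriv (by ring)
  have hG1 : ∀ σ : ℝ, HasDerivAt G
      ((2*σ + α₀ + α₁ - 1) - (Real.exp (L * (2*σ)) * (2*L) * ((σ - α₀ + 1/2) * (σ - α₁ + 1/2))
        + Real.exp (L * (2*σ)) * (2*σ - α₀ - α₁ + 1))) σ := by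
    intro σ
    rw [hGrw]
    exact (hQ σ).sub ((hE σ).mul (hP σ))
  have hG2 : ∀ σ : ℝ, HasDerivAt (fun σ =>
      (2*σ + α₀ + α₁ - 1) - (Real.exp (L * (2*σ)) * (2*L) * ((σ - α₀ + 1/2) * (σ - α₁ + 1/2))
        + Real.exp (L * (2*σ)) * (2*σ - α₀ - α₁ + 1)))
      (2 - Real.exp (L * (2*σ)) * (4*L^2 * ((σ - α₀ + 1/2) * (σ - α₁ + 1/2))
        + 4*L*(2*σ - α₀ - α₁ + 1) + 2)) σ := by
    intro σ
    have hlin' : HasDerivAt (fun σ : ℝ => 2*σ + α₀ + α₁ - 1) 2 σ := by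
      have := ((((hasDerivAt_id σ).const_mul 2).add_const α₀).add_const α₁).sub_const 1
      simpa using this
    have hterm1 : HasDerivAt (fun σ => Real.exp (L * (2*σ)) * (2*L) *
        ((σ - α₀ + 1/2) * (σ - α₁ + 1/2)))
        (Real.exp (L * (2*σ)) * (2*L) * (2*L) * ((σ - α₀ + 1/2) * (σ - α₁ + 1/2))
          + Real.exp (L * (2*σ)) * (2*L) * (2*σ - α₀ - α₁ + 1)) σ := by
      have := ((hE σ).mul_const (2*L)).fun_mul (hP σ)
      convert this using 1 <;> ring
    have hterm2 : HasDerivAt (fun σ => Real.exp (L * (2*σ)) * (2*σ - α₀ - α₁ + 1))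
        (Real.exp (L * (2*σ)) * (2*L) * (2*σ - α₀ - α₁ + 1)
          + Real.exp (L * (2*σ)) * 2) σ := by
      have hl : HasDerivAt (fun σ : ℝ => 2*σ - α₀ - α₁ + 1) 2 σ := by
        simpa using ((((hasDerivAt_id σ).const_mul 2).sub_const α₀).sub_const α₁).add_const 1
      have := (hE σ).fun_mul hl
      convert this using 1 <;> ring
    have := hlin'.fun_sub (hterm1.fun_add hterm2)
    exact this.congr_deriv (by ring)
  have hderivG : deriv G = fun σ =>
      (2*σ + α₀ + α₁ - 1) - (Real.exp (L * (2*σ)) * (2*L) * ((σ - α₀ + 1/2) * (σ - α₁ + 1/2))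
        + Real.exp (L * (2*σ)) * (2*σ - α₀ - α₁ + 1)) :=
    funext fun σ => (hG1 σ).deriv
  have hiter : ∀ σ : ℝ, iteratedDeriv 2 G σ =
      2 - Real.exp (L * (2*σ)) * (4*L^2 * ((σ - α₀ + 1/2) * (σ - α₁ + 1/2))
        + 4*L*(2*σ - α₀ - α₁ + 1) + 2) := by
    intro σ
    rw [iteratedDeriv_succ, iteratedDeriv_one, hderivG]
    exact (hG2 σ).deriv
  have hpos : ∀ σ : ℝ, 0 ≤ σ → σ ≤ 1/2 - α₀ → iteratedDeriv 2 G σ > 0 := by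
    intro σ h0 h1'
    rw [hiter σ]
    have hE1 : Real.exp (L * (2*σ)) ≤ 1 := by
      rw [Real.exp_le_one_iff]; nlinarith
    have hEpos : 0 < Real.exp (L * (2*σ)) := Real.exp_pos _
    have hfσ := hf σ h0 h1'
    have hkey : 0 < 4 * (-L) * Real.exp (L * (2*σ)) *
        (L*(σ-α₀+1/2)*(σ-α₁+1/2) + 2*σ - α₀ - α₁ + 1) := by
      exact mul_pos (mul_pos (by linarith) (Real.exp_pos _)) hfσ
    nlinarith [hkey, hE1]
  refine ⟨hpos, ?_⟩
  apply strictConvexOn_of_deriv2_pos (convex_Icc _ _)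
  · rw [hGrw]; fun_prop
  · intro x hx
    rw [interior_Icc] at hx
    have := hpos x hx.1.le hx.2.le
    rwa [iteratedDeriv_eq_iterate] at this
end

section
/- Let 0 < T < 1, α₁ > 1/2, α₀ + α₁ > 1, and α₀ < (1/2 - α₁)/((1/2 - α₁)·ln(1-T) + 1) + 1/2. Define G(σ) = (σ + α₀ - 1/2)(σ + α₁ - 1/2) - (1-T)^{2σ}(σ - α₀ + 1/2)(σ - α₁ + 1/2). Then G has a unique zero σ₀ in the open interval (0, 1/2 - α₀). -/
open Real Set

private lemma exp_quad (x : ℝ) (hx : 0 ≤ x) : 1 + x + x^2/2 ≤ Real.exp x := by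
  have hmono : MonotoneOn (fun x => Real.exp x - (1 + x + x^2/2)) (Ici 0) := by
    apply monotoneOn_of_deriv_nonneg (convex_Ici 0)
    · fun_prop
    · fun_prop
    · intro y hy
      have hd : HasDerivAt (fun x => Real.exp x - (1 + x + x^2/2))
          (Real.exp y - (0 + 1 + 2*y/2)) y := by
        have h1 := Real.hasDerivAt_exp y
        have h2 : HasDerivAt (fun x : ℝ => 1 + x + x^2/2) (0 + 1 + 2*y/2) y := by
          have := (((hasDerivAt_const y (1:ℝ)).add (hasDerivAt_id y)).add
            ((hasDerivAt_pow 2 y).div_const 2))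
          refine this.congr_deriv ?_
          norm_num
        exact h1.sub h2
      rw [hd.deriv]
      have := Real.add_one_le_exp y
      linarith
  have h0 : (0:ℝ) ∈ Ici (0:ℝ) := Set.self_mem_Ici
  have := hmono h0 hx hx
  simp at this
  linarith

private lemma keyineq (w : ℝ) (hw : w ≤ 0) : Real.exp w * (w^2 + 4*w + 2) ≤ 2 := by
  have hanti : AntitoneOn (fun w => 2 * Real.exp (-w) - (w^2 + 4*w + 2)) (Iic 0) := by
    apply antitoneOn_of_deriv_nonpos (convex_Iic 0)
    · fun_prop
    · fun_prop
    · intro y hy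
      rw [interior_Iic] at hy
      have hylt : y < 0 := hy
      have hd : HasDerivAt (fun w => 2 * Real.exp (-w) - (w^2 + 4*w + 2))
          (2 * (Real.exp (-y) * (-1)) - (2*y + 4)) y := by
        have h1 : HasDerivAt (fun w : ℝ => Real.exp (-w)) (Real.exp (-y) * (-1)) y :=
          (Real.hasDerivAt_exp (-y)).comp y (hasDerivAt_id y).neg
        have h2 : HasDerivAt (fun w : ℝ => w^2 + 4*w + 2) (2*y + 4) y := by
          have := ((hasDerivAt_pow 2 y).add ((hasDerivAt_id y).const_mul 4)).add_const 2
          refine this.congr_deriv ?_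
          norm_num
        exact (h1.const_mul 2).sub h2
      rw [hd.deriv]
      have hq := exp_quad (-y) (by linarith)
      nlinarith
  have := hanti hw (self_mem_Iic (a := (0:ℝ))) hw
  simp at this
  have hepos := Real.exp_pos w
  have hee : Real.exp w * Real.exp (-w) = 1 := by
    rw [← Real.exp_add]; simp
  nlinarith

private lemma main_aux (a b L : ℝ) (hb : 0 < b) (hL : L < 0) (hab : 0 < a + b)
    (hkey : a + b < L * a * b) :
    ∃! σ₀, σ₀ ∈ Set.Ioo (0:ℝ) (-a) ∧
      (σ₀ + a) * (σ₀ + b) - Real.exp (2*L*σ₀) * ((σ₀ - a) * (σ₀ - b)) = 0 := by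
  have ha : a < 0 := by
    by_contra h
    push_neg at h
    have h1 : 0 ≤ a * b := mul_nonneg h hb.le
    have h2 : L * (a*b) ≤ 0 := mul_nonpos_of_nonpos_of_nonneg hL.le h1
    nlinarith
  set F : ℝ → ℝ := fun σ => (σ + a) * (σ + b) - Real.exp (2*L*σ) * ((σ - a) * (σ - b))
    with hF
  set F' : ℝ → ℝ := fun σ => (2*σ + (a+b))
      - Real.exp (2*L*σ) * (2*L*((σ - a) * (σ - b)) + (2*σ - (a+b))) with hF'
  set F'' : ℝ → ℝ := fun σ => 2
      - Real.exp (2*L*σ) * ((2*L*(σ-a)+2) * (2*L*(σ-b)+2) - 2) with hF''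
  have hexp : ∀ σ : ℝ, HasDerivAt (fun σ : ℝ => Real.exp (2*L*σ))
      (Real.exp (2*L*σ) * (2*L)) σ := by
    intro σ
    have h0 : HasDerivAt (fun x : ℝ => 2*L*x) (2*L) σ := by
      simpa using (hasDerivAt_id σ).const_mul (2*L)
    exact (Real.hasDerivAt_exp _).comp σ h0
  have hQ : ∀ σ : ℝ, HasDerivAt (fun σ : ℝ => (σ - a) * (σ - b)) (2*σ - (a+b)) σ := by
    intro σ
    have := ((hasDerivAt_id σ).sub_const a).mul ((hasDerivAt_id σ).sub_const b)
    refine this.congr_deriv ?_; simp; ring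
  have hDF : ∀ σ, HasDerivAt F (F' σ) σ := by
    intro σ
    have h1 : HasDerivAt (fun σ : ℝ => (σ + a) * (σ + b)) (2*σ + (a+b)) σ := by
      have := ((hasDerivAt_id σ).add_const a).mul ((hasDerivAt_id σ).add_const b)
      refine this.congr_deriv ?_; simp; ring
    have := h1.sub ((hexp σ).mul (hQ σ))
    refine this.congr_deriv ?_; simp only [hF']; ring
  have hDF' : ∀ σ, HasDerivAt F' (F'' σ) σ := by
    intro σ
    have h1 : HasDerivAt (fun σ : ℝ => 2*σ + (a+b)) 2 σ := by
      simpa using ((hasDerivAt_id σ).const_mul 2).add_const (a+b)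
    have h2 : HasDerivAt (fun σ : ℝ => 2*L*((σ - a) * (σ - b)) + (2*σ - (a+b)))
        (2*L*(2*σ - (a+b)) + 2) σ := by
      have h3 : HasDerivAt (fun σ : ℝ => 2*σ - (a+b)) 2 σ := by
        simpa using ((hasDerivAt_id σ).const_mul 2).sub_const (a+b)
      exact ((hQ σ).const_mul (2*L)).add h3
    have := h1.sub ((hexp σ).mul h2)
    refine this.congr_deriv ?_; simp only [hF'']; ring
  have hcont : Continuous F := by
    apply Continuous.sub (by fun_prop) (by fun_prop)
  have hpos : ∀ x ∈ Ioo (0:ℝ) (-a), 0 < F'' x := by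
    intro x hx
    set w := 2*L*x with hw
    have hw0 : w < 0 := by
      have : 0 < x := hx.1
      nlinarith
    set p := -(2*L*a) with hp
    set q := -(2*L*b) with hq
    have hpq1 : p*q + 2*p + 2*q < 0 := by
      simp only [hp, hq]; nlinarith
    have hpq2 : 0 < p + q := by simp only [hp, hq]; nlinarith
    have hki := keyineq w (le_of_lt hw0)
    have hepos := Real.exp_pos w
    have hneg : (p+q)*w + (p*q + 2*p + 2*q) < 0 := by nlinarith
    have hkey2 : Real.exp w * ((w+p+2)*(w+q+2) - 2) < 2 := by nlinarith
    have harg : (2*L*(x-a)+2) * (2*L*(x-b)+2) - 2 = (w+p+2)*(w+q+2) - 2 := by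
      simp only [hw, hp, hq]; ring
    simp only [hF'']
    rw [← hw, harg]
    linarith
  have hconv : StrictConvexOn ℝ (Icc (0:ℝ) (-a)) F := by
    apply strictConvexOn_of_deriv2_pos (convex_Icc _ _) (hcont.continuousOn)
    intro x hx
    rw [interior_Icc] at hx
    have e1 : deriv F = F' := funext fun σ => (hDF σ).deriv
    have e2 : deriv (deriv F) x = F'' x := by rw [e1]; exact (hDF' x).deriv
    simpa [Function.iterate_succ, e2] using (e2 ▸ hpos x hx)
  have hF0 : F 0 = 0 := by simp only [hF]; simp
  have hFa : 0 < F (-a) := by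
    simp only [hF]
    have h1 : (-a + a) * (-a + b) = 0 := by ring
    have hepos := Real.exp_pos (2*L*(-a))
    have h2 : (-a - a) * (-a - b) < 0 := by nlinarith
    nlinarith [mul_neg_of_pos_of_neg hepos h2]
  have hF'0 : F' 0 < 0 := by
    simp only [hF']; simp; nlinarith
  have hc : ∃ c, c ∈ Ioo (0:ℝ) (-a) ∧ F c < 0 := by
    have hslope : Filter.Tendsto (slope F 0) (nhdsWithin 0 (Ioi 0)) (nhds (F' 0)) := by
      apply (hasDerivAt_iff_tendsto_slope.mp (hDF 0)).mono_left
      apply nhdsWithin_mono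
      intro x hx
      exact ne_of_gt hx
    have h1 : ∀ᶠ x in nhdsWithin 0 (Ioi 0), slope F 0 x < 0 :=
      hslope.eventually_lt_const hF'0
    have h2 : ∀ᶠ x in nhdsWithin 0 (Ioi 0), x ∈ Ioo (0:ℝ) (-a) :=
      Ioo_mem_nhdsGT_of_mem ⟨le_refl 0, by linarith⟩
    obtain ⟨c, hc1, hc2⟩ := (h1.and h2).exists
    refine ⟨c, hc2, ?_⟩
    have hcpos : 0 < c := hc2.1
    have hslope' : F c / c < 0 := by
      rw [slope_def_field, hF0] at hc1
      simpa using hc1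
    by_contra h
    push_neg at h
    exact absurd (div_nonneg h hcpos.le) (not_le.mpr hslope')
  obtain ⟨c, hcmem, hcneg⟩ := hc
  -- existence via IVT on [c, -a]
  have hivt : ∃ σ₀ ∈ Ioo c (-a), F σ₀ = 0 := by
    have hsub := intermediate_value_Ioo (le_of_lt hcmem.2) hcont.continuousOn
    have h0mem : (0:ℝ) ∈ Ioo (F c) (F (-a)) := ⟨hcneg, hFa⟩
    obtain ⟨σ₀, hσmem, hσval⟩ := hsub h0mem
    exact ⟨σ₀, hσmem, hσval⟩
  obtain ⟨σ₀, hσmem, hσval⟩ := hivt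
  have hσmem' : σ₀ ∈ Ioo (0:ℝ) (-a) := ⟨lt_trans hcmem.1 hσmem.1, hσmem.2⟩
  -- uniqueness: any zero is strictly negative-free by strict convexity
  have hzero_lt : ∀ x y : ℝ, x ∈ Ioo (0:ℝ) (-a) → y ∈ Ioo (0:ℝ) (-a) → F y = 0 →
      x < y → F x < 0 := by
    intro x y hx hy hFy hxy
    have hy0 : 0 < y := hy.1
    have hA : 0 < 1 - x/y := by
      rw [sub_pos, div_lt_one hy0]; exact hxy
    have hB : 0 < x/y := div_pos hx.1 hy0
    have h0mem : (0:ℝ) ∈ Icc (0:ℝ) (-a) := ⟨le_refl 0, by linarith⟩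
    have hymem : y ∈ Icc (0:ℝ) (-a) := ⟨hy0.le, hy.2.le⟩
    have hne : (0:ℝ) ≠ y := ne_of_lt hy0
    have hsum1 : (1 - x/y) + x/y = 1 := by ring
    have := hconv.2 h0mem hymem hne hA hB hsum1
    simp only [smul_eq_mul, mul_zero, zero_add] at this
    have hxy' : x/y * y = x := div_mul_cancel₀ x (ne_of_gt hy0)
    rw [hxy', hF0, hFy] at this
    simpa using this
  have huniq : ∀ x : ℝ, x ∈ Ioo (0:ℝ) (-a) → F x = 0 → x = σ₀ := by
    intro x hx hFx
    rcases lt_trichotomy x σ₀ with h | h | h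
    · exact absurd (hzero_lt x σ₀ hx hσmem' hσval h) (by rw [hFx]; exact lt_irrefl 0)
    · exact h
    · exact absurd (hzero_lt σ₀ x hσmem' hx hFx h) (by rw [hσval]; exact lt_irrefl 0)
  exact ⟨σ₀, ⟨hσmem', hσval⟩, fun y hy => huniq y hy.1 hy.2⟩

theorem stmt_5 (T α₀ α₁ : ℝ) (hT0 : 0 < T) (hT1 : T < 1) (hα₁ : 1/2 < α₁)
    (hsum : α₀ + α₁ > 1)
    (hα₀ : α₀ < (1/2 - α₁) / ((1/2 - α₁) * Real.log (1-T) + 1) + 1/2)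
    (G : ℝ → ℝ)
    (hG : G = fun σ => (σ + α₀ - 1/2) * (σ + α₁ - 1/2)
      - (1-T) ^ (2*σ) * ((σ - α₀ + 1/2) * (σ - α₁ + 1/2))) :
    ∃! σ₀, σ₀ ∈ Set.Ioo (0:ℝ) (1/2 - α₀) ∧ G σ₀ = 0 := by
  set L := Real.log (1-T) with hLdef
  have h1T : (0:ℝ) < 1 - T := by linarith
  have hL : L < 0 := Real.log_neg (by linarith) (by linarith)
  set a := α₀ - 1/2 with hadef
  set b := α₁ - 1/2 with hbdef
  have hb : 0 < b := by simp only [hbdef]; linarith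
  have hab : 0 < a + b := by simp only [hadef, hbdef]; linarith
  have hD : 0 < (1/2 - α₁) * L + 1 := by nlinarith
  have hkey : a + b < L * a * b := by
    have h1 : a < (1/2 - α₁) / ((1/2 - α₁) * L + 1) := by
      simp only [hadef]; linarith
    rw [lt_div_iff₀ hD] at h1
    simp only [hadef, hbdef]
    nlinarith [h1]
  have hGF : G = fun σ => (σ + a) * (σ + b) - Real.exp (2*L*σ) * ((σ - a) * (σ - b)) := by
    rw [hG]
    funext σ
    rw [Real.rpow_def_of_pos h1T]
    rw [show Real.log (1-T) * (2*σ) = 2*L*σ from by rw [hLdef]; ring]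
    simp only [hadef, hbdef]
    ring
  have hival : (1/2 - α₀ : ℝ) = -a := by simp only [hadef]; ring
  rw [hival, hGF]
  exact main_aux a b L hb hL hab hkey
end
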